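/- Let M be a one-way partially blind deterministic automaton with a real counter whose reachable counter values are bounded above by some real α. Then the language recognized by M is regular. -/

import Mathlib

/-- A one-way partially blind deterministic automaton with a real counter
`C_ℝ(k) = (ℝ, {√p₁,…,√p_k}, ℝ⁻)`: at each step it changes state and adds or
subtracts one generator `√pᵢ` (square roots of distinct primes). -/
structure RealCounterPBDC (σ : Type) where
  k : ℕ
  p : Fin k → ℕ
  p_prime : ∀ i, (p i).Prime
  p_inj : Function.Injective p
  Q : Type
  [finQ : Fintype Q]
  q₀ : Q
  /-- transition: next state, together with the generator index and a flag
  (`true` = increment by `√pᵢ`, `false` = decrement by `√pᵢ`). -/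
  δ : Q → σ → Q × (Fin k × Bool)
  accept : Set Q

namespace RealCounterPBDC

variable {σ : Type} (M : RealCounterPBDC σ)

/-- The real value added to the counter in one step. -/
noncomputable def incr (m : Fin M.k × Bool) : ℝ :=
  if m.2 then Real.sqrt (M.p m.1) else -Real.sqrt (M.p m.1)

/-- One step on a configuration (state, counter value). -/
noncomputable def step (c : M.Q × ℝ) (a : σ) : M.Q × ℝ :=
  ((M.δ c.1 a).1, c.2 + M.incr (M.δ c.1 a).2)

/-- Configuration reached from the initial configuration after reading `x`. -/
noncomputable def run (x : List σ) : M.Q × ℝ :=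
  x.foldl M.step (M.q₀, 0)

/-- Counter value after reading `x` from the start. -/
noncomputable def ctr (x : List σ) : ℝ := (M.run x).2

/-- `M` accepts `x` iff the counter stays nonnegative throughout (partial
blindness: otherwise the machine crashes), the final state is accepting, and
the final counter value is `0`. -/
noncomputable def language : Language σ :=
  { x | (∀ y, y <+: x → 0 ≤ M.ctr y) ∧ (M.run x).1 ∈ M.accept ∧ M.ctr x = 0 }

end RealCounterPBDC

namespace RCAux

variable {σ : Type} (M : RealCounterPBDC σ)

/-- The state part of `M`, as a DFA (accepting set irrelevant). -/
def SD : DFA σ M.Q := ⟨fun q a => (M.δ q a).1, M.q₀, ∅⟩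

/-- Counter delta of reading `w` from state `q`. -/
noncomputable def dlt (q : M.Q) (w : List σ) : ℝ := (w.foldl M.step (q, 0)).2

/-- `x` never drives the counter negative. -/
def Valid (x : List σ) : Prop := ∀ y, y <+: x → 0 ≤ M.ctr y

variable {M}

lemma go_eq (w : List σ) : ∀ (q : M.Q) (v : ℝ),
    w.foldl M.step (q, v) = ((SD M).evalFrom q w, v + dlt M q w) := by
  induction w with
  | nil => intro q v; simp [dlt, DFA.evalFrom]
  | cons a w ih =>
    intro q v
    have hs : ∀ u : ℝ, M.step (q, u) a = ((M.δ q a).1, u + M.incr (M.δ q a).2) := fun _ => rfl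
    have hd : dlt M q (a :: w) = M.incr (M.δ q a).2 + dlt M (M.δ q a).1 w := by
      show ((a :: w).foldl M.step (q, 0)).2 = _
      rw [List.foldl_cons, hs, ih]
      simp
    simp only [List.foldl_cons, hs, ih]
    have he : (SD M).evalFrom q (a :: w) = (SD M).evalFrom (M.δ q a).1 w := rfl
    rw [he, hd]
    exact Prod.ext rfl (by ring)

lemma run_eq (x : List σ) : M.run x = ((SD M).eval x, M.ctr x) := by
  have h := go_eq (M := M) x M.q₀ 0
  have : M.run x = ((SD M).eval x, 0 + dlt M M.q₀ x) := h
  rw [this]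
  simp only [RealCounterPBDC.ctr, this]

lemma run_fst (x : List σ) : (M.run x).1 = (SD M).eval x := by rw [run_eq]

lemma ctr_append (x y : List σ) :
    M.ctr (x ++ y) = M.ctr x + dlt M ((SD M).eval x) y := by
  have h1 : M.run (x ++ y) = y.foldl M.step (M.run x) := List.foldl_append ..
  rw [RealCounterPBDC.ctr, h1, run_eq, go_eq]

lemma eval_append (x y : List σ) :
    (SD M).eval (x ++ y) = (SD M).evalFrom ((SD M).eval x) y :=
  (SD M).evalFrom_of_append _ _ _

lemma prefix_split {x y p : List σ} (h : p <+: x ++ y) :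
    p <+: x ∨ ∃ y', y' <+: y ∧ p = x ++ y' := by
  rcases (List.prefix_or_prefix_of_prefix h (x.prefix_append y)) with h1 | h1
  · exact Or.inl h1
  · right
    obtain ⟨t, rfl⟩ := h1
    refine ⟨t, ?_, rfl⟩
    obtain ⟨u, hu⟩ := h
    rw [List.append_assoc] at hu
    exact ⟨u, List.append_cancel_left hu⟩

lemma prefix_append_left {b' b : List σ} (h : b' <+: b) (a : List σ) :
    a ++ b' <+: a ++ b := by
  obtain ⟨t, rfl⟩ := h
  exact ⟨t, by rw [List.append_assoc]⟩

lemma Valid.prefix {x y : List σ} (h : Valid M x) (hp : y <+: x) : Valid M y :=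
  fun z hz => h z (hz.trans hp)

lemma valid_nil : Valid M [] := by
  intro y hy
  rw [List.prefix_nil.mp hy]
  exact le_refl _

/-- Pumping: a loop occurring after a valid word has nonpositive counter delta. -/
lemma loop_nonpos (α : ℝ)
    (hbdd : ∀ x : List σ, Valid M x → M.ctr x ≤ α)
    {a b : List σ} (hq : (SD M).evalFrom ((SD M).eval a) b = (SD M).eval a)
    (hv : Valid M (a ++ b)) : dlt M ((SD M).eval a) b ≤ 0 := by
  set q := (SD M).eval a with hqdef
  set d := dlt M q b with hddef
  by_contra hpos
  push_neg at hpos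
  -- the pumped words a ++ b^n
  set rep : ℕ → List σ := fun n => a ++ (List.replicate n b).flatten with hrep
  have hrep0 : rep 0 = a := by simp [hrep]
  have hrepS : ∀ n, rep (n + 1) = rep n ++ b := by
    intro n
    simp [hrep, List.replicate_succ', List.append_assoc]
  have key : ∀ n, (SD M).eval (rep n) = q ∧ M.ctr (rep n) = M.ctr a + n * d ∧
      Valid M (rep n) := by
    intro n
    induction n with
    | zero =>
      refine ⟨by rw [hrep0], by rw [hrep0]; simp, hv.prefix (by rw [hrep0]; exact a.prefix_append b)⟩
    | succ n ih =>
      obtain ⟨he, hc, hval⟩ := ih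
      have he' : (SD M).eval (rep (n + 1)) = q := by
        rw [hrepS, eval_append, he, hq]
      have hc' : M.ctr (rep (n + 1)) = M.ctr a + ((n : ℕ) + 1 : ℕ) * d := by
        rw [hrepS, ctr_append, he, hc, ← hddef]
        push_cast
        ring
      refine ⟨he', hc', ?_⟩
      intro y hy
      rw [hrepS] at hy
      rcases prefix_split hy with h1 | ⟨b', hb', rfl⟩
      · exact hval y h1
      · have e1 : M.ctr (rep n ++ b') = M.ctr (rep n) + dlt M q b' := by
          rw [ctr_append, he]
        have e2 : M.ctr (a ++ b') = M.ctr a + dlt M q b' := by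
          rw [ctr_append, hqdef]
        have h1 : 0 ≤ M.ctr (a ++ b') := hv _ (prefix_append_left hb' a)
        have h2 : (0:ℝ) ≤ (n : ℕ) * d := by positivity
        rw [e1, hc]
        linarith
  obtain ⟨n, hn⟩ := exists_nat_gt ((α - M.ctr a) / d)
  have hle := hbdd (rep n) (key n).2.2
  rw [(key n).2.1] at hle
  have : (α - M.ctr a) / d < n := hn
  have := (div_lt_iff₀ hpos).mp this
  linarith

/-- Loop deletion preserves validity, final state, and shifts the counter by `-d`. -/
lemma loop_delete (α : ℝ)
    (hbdd : ∀ x : List σ, Valid M x → M.ctr x ≤ α)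
    {a b c : List σ} (hq : (SD M).evalFrom ((SD M).eval a) b = (SD M).eval a)
    (hv : Valid M (a ++ b ++ c)) :
    Valid M (a ++ c) ∧
      M.ctr (a ++ c) = M.ctr (a ++ b ++ c) - dlt M ((SD M).eval a) b ∧
      (SD M).eval (a ++ c) = (SD M).eval (a ++ b ++ c) := by
  set q := (SD M).eval a with hqdef
  set d := dlt M q b with hddef
  have hd : d ≤ 0 := loop_nonpos α hbdd hq (hv.prefix ((a ++ b).prefix_append c))
  have heab : (SD M).eval (a ++ b) = q := by rw [eval_append, hq]
  have hctr2 : ∀ c' : List σ, M.ctr (a ++ b ++ c') = M.ctr (a ++ c') + d := by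
    intro c'
    rw [ctr_append, ctr_append, heab, ctr_append, ← hqdef, ← hddef]
    ring
  have hval : Valid M (a ++ c) := by
    intro y hy
    rcases prefix_split hy with h1 | ⟨c', hc', rfl⟩
    · exact hv y (h1.trans ((a.prefix_append b).trans ((a ++ b).prefix_append c)))
    · have h0 : 0 ≤ M.ctr (a ++ b ++ c') := hv _ (prefix_append_left hc' (a ++ b))
      have := hctr2 c'
      linarith
  refine ⟨hval, by rw [hctr2 c]; ring, ?_⟩
  rw [eval_append, eval_append, heab, ← hqdef]

variable (M)

/-- Negative deltas of short loops (we only need a finite superset). -/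
noncomputable def Dneg : Set ℝ :=
  {d | d < 0 ∧ ∃ (q : M.Q) (w : List σ), w.length ≤ Nat.card M.Q ∧ dlt M q w = d}

variable {M}

lemma dneg_finite [Fintype σ] : (Dneg M).Finite := by
  letI := M.finQ
  have h1 : ((Set.univ : Set M.Q) ×ˢ {w : List σ | w.length ≤ Nat.card M.Q}).Finite :=
    Set.finite_univ.prod (List.finite_length_le σ _)
  refine Set.Finite.subset (h1.image (fun p => dlt M p.1 p.2)) ?_
  rintro d ⟨-, q, w, hw, rfl⟩
  exact ⟨(q, w), ⟨trivial, hw⟩, rfl⟩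

/-- Decomposition: every valid counter value is the value of a short valid word
plus a sum of negative short-loop deltas. -/
lemma decomp (α : ℝ) (hbdd : ∀ x : List σ, Valid M x → M.ctr x ≤ α) :
    ∀ (n : ℕ) (x : List σ), x.length = n → Valid M x →
      ∃ (y : List σ) (l : List ℝ), y.length ≤ Nat.card M.Q ∧ Valid M y ∧
        (∀ d ∈ l, d ∈ Dneg M) ∧ M.ctr x = M.ctr y + l.sum := by
  letI := M.finQ
  intro n
  induction n using Nat.strong_induction_on with
  | _ n ih =>
    intro x hxn hx
    have hcard : Nat.card M.Q = Fintype.card M.Q := Nat.card_eq_fintype_card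
    by_cases hlen : x.length ≤ Nat.card M.Q
    · exact ⟨x, [], hlen, hx, by simp, by simp⟩
    · push_neg at hlen
      obtain ⟨q, a, b, c, hsplit, hab, hbne, ha, hloop, -⟩ :=
        (SD M).evalFrom_split (x := x) (s := (SD M).start) (t := (SD M).eval x)
          (by omega) rfl
      have ha' : (SD M).eval a = q := ha
      subst hsplit
      rw [← ha'] at hloop
      set d := dlt M ((SD M).eval a) b with hddef
      obtain ⟨hval', hctr', -⟩ := loop_delete α hbdd hloop hx
      have hlt : (a ++ c).length < n := by
        rw [← hxn]
        simp only [List.length_append]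
        have : 0 < b.length := List.length_pos_iff.mpr hbne
        omega
      obtain ⟨y, l, hy1, hy2, hy3, hy4⟩ := ih _ hlt (a ++ c) rfl hval'
      have hdle : d ≤ 0 :=
        loop_nonpos α hbdd hloop (hx.prefix ((a ++ b).prefix_append c))
      rcases lt_or_eq_of_le hdle with hdlt | hdeq
      · refine ⟨y, d :: l, hy1, hy2, ?_, ?_⟩
        · intro e he
          rcases List.mem_cons.mp he with rfl | he
          · exact ⟨hdlt, (SD M).eval a, b, by omega, rfl⟩
          · exact hy3 e he
        · rw [List.sum_cons]
          have : M.ctr (a ++ b ++ c) = M.ctr (a ++ c) + d := by rw [hctr']; ring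
          rw [this, hy4]; ring
      · refine ⟨y, l, hy1, hy2, hy3, ?_⟩
        have : M.ctr (a ++ b ++ c) = M.ctr (a ++ c) + d := by rw [hctr']; ring
        rw [this, hy4, hdeq]; ring

/-- The set of valid counter values is finite. -/
lemma values_finite [Fintype σ] (α : ℝ)
    (hbdd : ∀ x : List σ, Valid M x → M.ctr x ≤ α) :
    {v : ℝ | ∃ x, Valid M x ∧ M.ctr x = v}.Finite := by
  letI := M.finQ
  set m := Nat.card M.Q with hm
  have hShort : {v : ℝ | ∃ y : List σ, y.length ≤ m ∧ Valid M y ∧ M.ctr y = v}.Finite := by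
    refine ((List.finite_length_le σ m).image M.ctr).subset ?_
    rintro v ⟨y, h1, h2, rfl⟩
    exact ⟨y, h1, rfl⟩
  have hD := dneg_finite (M := M)
  by_cases hne : (Dneg M).Nonempty
  · obtain ⟨μ, hμmem, hμmax⟩ :=
      Set.exists_max_image (Dneg M) (fun d => d) hD hne
    have hμneg : μ < 0 := hμmem.1
    have hctrnil : M.ctr ([] : List σ) = 0 := rfl
    have hα : 0 ≤ α := by
      have := hbdd [] valid_nil
      rw [hctrnil] at this
      exact this
    set N := ⌈α / (-μ)⌉₊ with hN
    have hlists : {l : List ℝ | (∀ d ∈ l, d ∈ Dneg M) ∧ l.length ≤ N}.Finite := by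
      have : Finite ↥(Dneg M) := hD.to_subtype
      refine ((List.finite_length_le ↥(Dneg M) N).image (List.map Subtype.val)).subset ?_
      rintro l ⟨hmem, hlen⟩
      refine ⟨l.attach.map (fun d => (⟨d.1, hmem d.1 d.2⟩ : ↥(Dneg M))), by simpa using hlen, ?_⟩
      simp [List.map_map]
    have hsum : (List.sum '' {l : List ℝ | (∀ d ∈ l, d ∈ Dneg M) ∧ l.length ≤ N}).Finite :=
      hlists.image _
    refine (Set.Finite.image2 (fun a b => a + b) hShort hsum).subset ?_
    rintro v ⟨x, hx, rfl⟩
    obtain ⟨y, l, hy1, hy2, hy3, hy4⟩ := decomp α hbdd x.length x rfl hx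
    have hsle : ∀ d ∈ l, d ≤ μ := fun d hd => hμmax d (hy3 d hd)
    have h1 : l.sum ≤ l.length • μ := List.sum_le_card_nsmul l μ hsle
    rw [nsmul_eq_mul] at h1
    have hxnn : 0 ≤ M.ctr x := hx x (List.prefix_refl x)
    have hyle : M.ctr y ≤ α := hbdd y hy2
    have h2 : -α ≤ l.sum := by linarith
    have h3 : (l.length : ℝ) * (-μ) ≤ α := by nlinarith
    have h4 : (l.length : ℝ) ≤ α / (-μ) := (le_div_iff₀ (by linarith)).mpr h3
    have h5 : l.length ≤ N := by
      have h6 := h4.trans (Nat.le_ceil _)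
      rw [← hN] at h6
      exact_mod_cast h6
    exact ⟨M.ctr y, ⟨y, hy1, hy2, rfl⟩, l.sum, ⟨l, ⟨hy3, h5⟩, rfl⟩, hy4.symm⟩
  · refine hShort.subset ?_
    rintro v ⟨x, hx, rfl⟩
    obtain ⟨y, l, hy1, hy2, hy3, hy4⟩ := decomp α hbdd x.length x rfl hx
    have hl : l = [] := by
      cases l with
      | nil => rfl
      | cons d l => exact absurd ⟨d, hy3 d (List.mem_cons_self ..)⟩ hne
    exact ⟨y, hy1, hy2, by rw [hy4, hl]; simp⟩

variable (M) in
/-- The set of configurations reachable by valid words. -/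
def ConfSet : Set (M.Q × ℝ) := {c | ∃ x, Valid M x ∧ M.run x = c}

/-- The set of valid configurations is finite. -/
lemma configs_finite [Fintype σ] (α : ℝ)
    (hbdd : ∀ x : List σ, Valid M x → M.ctr x ≤ α) :
    (ConfSet M).Finite := by
  letI := M.finQ
  have h := (Set.finite_univ (α := M.Q)).prod (values_finite α hbdd)
  refine h.subset ?_
  rintro ⟨q, v⟩ ⟨x, hx, hrun⟩
  exact ⟨trivial, x, hx, by rw [RealCounterPBDC.ctr, hrun]⟩

lemma conf_nil : (M.q₀, (0:ℝ)) ∈ ConfSet M := ⟨[], valid_nil, rfl⟩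

lemma run_append_singleton (x : List σ) (a : σ) :
    M.run (x ++ [a]) = M.step (M.run x) a := by
  rw [RealCounterPBDC.run, List.foldl_append]
  rfl

lemma prefix_singleton {y : List σ} {a : σ} (h : y <+: [a]) : y = [] ∨ y = [a] := by
  cases y with
  | nil => exact Or.inl rfl
  | cons b t =>
    obtain ⟨w, hw, ht⟩ := List.cons_prefix_iff.mp h
    obtain ⟨rfl, rfl⟩ := List.cons.inj hw
    exact Or.inr (by rw [List.prefix_nil.mp ht])

lemma valid_snoc {x : List σ} {a : σ} (hx : Valid M x)
    (h : 0 ≤ (M.step (M.run x) a).2) : Valid M (x ++ [a]) := by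
  intro y hy
  rcases prefix_split hy with h1 | ⟨y', hy', rfl⟩
  · exact hx y h1
  · rcases prefix_singleton hy' with rfl | rfl
    · rw [List.append_nil]
      exact hx x (List.prefix_refl x)
    · rw [RealCounterPBDC.ctr, run_append_singleton]
      exact h

lemma conf_step {c : M.Q × ℝ} (hc : c ∈ ConfSet M) {a : σ} (h : 0 ≤ (M.step c a).2) :
    M.step c a ∈ ConfSet M := by
  obtain ⟨x, hx, rfl⟩ := hc
  exact ⟨x ++ [a], valid_snoc hx h, run_append_singleton x a⟩

variable (M) in
/-- The DFA simulating `M` on its (finitely many) valid configurations. -/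
noncomputable def theDFA : DFA σ (Option ↥(ConfSet M)) where
  step := fun s a => match s with
    | none => none
    | some c =>
        if h : 0 ≤ (M.step c.1 a).2 then some ⟨M.step c.1 a, conf_step c.2 h⟩ else none
  start := some ⟨(M.q₀, 0), conf_nil⟩
  accept := {s | ∃ c : ↥(ConfSet M),
    s = some c ∧ (c : M.Q × ℝ).1 ∈ M.accept ∧ (c : M.Q × ℝ).2 = 0}

lemma theDFA_eval (x : List σ) :
    ((theDFA M).eval x = none ∧ ¬ Valid M x) ∨
    (∃ hc : M.run x ∈ ConfSet M, Valid M x ∧ (theDFA M).eval x = some ⟨M.run x, hc⟩) := by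
  induction x using List.reverseRecOn with
  | nil => exact Or.inr ⟨conf_nil, valid_nil, rfl⟩
  | append_singleton x a ih =>
    have hev : (theDFA M).eval (x ++ [a]) = (theDFA M).step ((theDFA M).eval x) a :=
      DFA.eval_append_singleton _ _ _
    rcases ih with ⟨he, hnv⟩ | ⟨hc, hv, he⟩
    · left
      constructor
      · rw [hev, he]; rfl
      · intro hcontra
        exact hnv (hcontra.prefix (x.prefix_append [a]))
    · have hstep : (theDFA M).step (some ⟨M.run x, hc⟩) a =
          if h : 0 ≤ (M.step (M.run x) a).2 then
            some ⟨M.step (M.run x) a, conf_step hc h⟩ else none := rfl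
      by_cases h : 0 ≤ (M.step (M.run x) a).2
      · right
        have hv' : Valid M (x ++ [a]) := valid_snoc hv h
        have hrun : M.run (x ++ [a]) = M.step (M.run x) a := run_append_singleton x a
        refine ⟨hrun ▸ conf_step hc h, hv', ?_⟩
        rw [hev, he, hstep, dif_pos h]
        exact congrArg some (Subtype.ext hrun.symm)
      · left
        constructor
        · rw [hev, he, hstep, dif_neg h]
        · intro hcontra
          apply h
          have h2 := hcontra (x ++ [a]) (List.prefix_refl _)
          rwa [RealCounterPBDC.ctr, run_append_singleton] at h2

end RCAux

theorem bounded_counter_implies_regular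
    {σ : Type} [Fintype σ] (M : RealCounterPBDC σ) (α : ℝ)
    (hbdd : ∀ x : List σ, (∀ y, y <+: x → 0 ≤ M.ctr y) → M.ctr x ≤ α) :
    M.language.IsRegular := by
  classical
  letI := M.finQ
  have hbdd' : ∀ x : List σ, RCAux.Valid M x → M.ctr x ≤ α := fun x hx => hbdd x hx
  have hfin := RCAux.configs_finite α hbdd'
  letI : Fintype ↥(RCAux.ConfSet M) := hfin.fintype
  refine ⟨Option ↥(RCAux.ConfSet M), inferInstance, RCAux.theDFA M, ?_⟩
  ext x
  rw [DFA.mem_accepts]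
  have hlang : x ∈ M.language ↔
      (∀ y, y <+: x → 0 ≤ M.ctr y) ∧ (M.run x).1 ∈ M.accept ∧ M.ctr x = 0 := Iff.rfl
  rcases RCAux.theDFA_eval (M := M) x with ⟨he, hnv⟩ | ⟨hc, hv, he⟩
  · rw [he]
    constructor
    · rintro ⟨c, hcontra, -⟩
      exact absurd hcontra (by simp)
    · intro hx
      exact absurd (fun y hy => (hlang.mp hx).1 y hy) hnv
  · rw [he]
    constructor
    · rintro ⟨c, hsome, hacc, hzero⟩
      have hceq : (⟨M.run x, hc⟩ : ↥(RCAux.ConfSet M)) = c := Option.some.inj hsome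
      rw [← hceq] at hacc hzero
      exact hlang.mpr ⟨hv, hacc, hzero⟩
    · intro hx
      exact ⟨⟨M.run x, hc⟩, rfl, (hlang.mp hx).2.1, (hlang.mp hx).2.2⟩
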